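/- Let S be a semigroup of Hénon maps of C^2 generated by a finite set of compositions of generalized Hénon maps, each of degree at least 2. Then S has a unique minimal generating set G0 consisting of Hénon maps: every generating set G of S contains G0. -/

import Mathlib

open Filter Metric Set

noncomputable section

/-- A generalized Hénon map of ℂ²: `H (x,y) = (y, p(y) - a x)` with `a ≠ 0` and
`deg p = d ≥ 2`. -/
def IsGenHenonDeg (h : ℂ × ℂ → ℂ × ℂ) (d : ℕ) : Prop :=
  ∃ (a : ℂ) (p : Polynomial ℂ), a ≠ 0 ∧ 2 ≤ p.natDegree ∧ p.natDegree = d ∧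
    ∀ x y : ℂ, h (x, y) = (y, p.eval y - a * x)

/-- A Hénon map of degree `d`: a finite (nonempty) composition of generalized
Hénon maps, `d` being the product of the degrees of the factors. -/
def IsHenonDeg (h : ℂ × ℂ → ℂ × ℂ) (d : ℕ) : Prop :=
  ∃ l : List ((ℂ × ℂ → ℂ × ℂ) × ℕ), l ≠ [] ∧
    (∀ gd ∈ l, IsGenHenonDeg gd.1 gd.2) ∧
    h = (l.map Prod.fst).foldr (· ∘ ·) id ∧ d = (l.map Prod.snd).prod

def IsHenon (h : ℂ × ℂ → ℂ × ℂ) : Prop := ∃ d, IsHenonDeg h d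

lemma genHenon_step {h : ℂ × ℂ → ℂ × ℂ} {e : ℕ} (hh : IsGenHenonDeg h e)
    {A B : Polynomial ℂ} (hAB : A.natDegree < B.natDegree) :
    ∃ A' B' : Polynomial ℂ, A'.natDegree < B'.natDegree ∧
      B'.natDegree = e * B.natDegree ∧
      ∀ y : ℂ, h (A.eval y, B.eval y) = (A'.eval y, B'.eval y) := by
  obtain ⟨a, p, ha, hp2, hpd, heq⟩ := hh
  have hB1 : 1 ≤ B.natDegree := by omega
  have hcomp : (p.comp B).natDegree = e * B.natDegree := by
    rw [Polynomial.natDegree_comp, hpd]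
  have hCA : (Polynomial.C a * A).natDegree = A.natDegree := by
    rw [Polynomial.natDegree_C_mul ha]
  have hlt : (Polynomial.C a * A).natDegree < (p.comp B).natDegree := by
    rw [hCA, hcomp]
    calc A.natDegree < B.natDegree := hAB
      _ ≤ e * B.natDegree := Nat.le_mul_of_pos_left _ (by omega)
  have hdeg : (p.comp B - Polynomial.C a * A).natDegree = e * B.natDegree := by
    rw [Polynomial.natDegree_sub_eq_left_of_natDegree_lt hlt, hcomp]
  refine ⟨B, p.comp B - Polynomial.C a * A, ?_, hdeg, ?_⟩
  · rw [hdeg]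
    have : 2 * B.natDegree ≤ e * B.natDegree := Nat.mul_le_mul_right _ (hpd ▸ hp2)
    omega
  · intro y
    rw [heq]
    simp

lemma foldr_curve {l : List ((ℂ × ℂ → ℂ × ℂ) × ℕ)}
    (hl : ∀ gd ∈ l, IsGenHenonDeg gd.1 gd.2)
    {A B : Polynomial ℂ} (hAB : A.natDegree < B.natDegree) :
    ∃ A' B' : Polynomial ℂ, A'.natDegree < B'.natDegree ∧
      B'.natDegree = (l.map Prod.snd).prod * B.natDegree ∧
      ∀ y : ℂ, (l.map Prod.fst).foldr (· ∘ ·) id (A.eval y, B.eval y)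
        = (A'.eval y, B'.eval y) := by
  induction l with
  | nil => exact ⟨A, B, hAB, by simp, fun y => rfl⟩
  | cons g t ih =>
    obtain ⟨A1, B1, h1, hd1, he1⟩ := ih (fun gd hg => hl gd (List.mem_cons_of_mem _ hg))
    obtain ⟨A2, B2, h2, hd2, he2⟩ := genHenon_step (hl g List.mem_cons_self) h1
    refine ⟨A2, B2, h2, ?_, ?_⟩
    · simp only [List.map_cons, List.prod_cons]; rw [hd2, hd1]; ring
    · intro y
      simp only [List.map_cons, List.foldr_cons, Function.comp_apply, he1, he2]

lemma isHenonDeg_curve {h : ℂ × ℂ → ℂ × ℂ} {d : ℕ} (hh : IsHenonDeg h d) :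
    ∃ B : Polynomial ℂ, B.natDegree = d ∧ ∀ y : ℂ, (h (0, y)).2 = B.eval y := by
  obtain ⟨l, -, hl, hfold, hprod⟩ := hh
  have hAB : (0 : Polynomial ℂ).natDegree < (Polynomial.X : Polynomial ℂ).natDegree := by
    simp
  obtain ⟨A', B', -, hd, he⟩ := foldr_curve hl hAB
  refine ⟨B', ?_, fun y => ?_⟩
  · rw [hd, ← hprod]; simp
  · have := he y
    simp only [Polynomial.eval_zero, Polynomial.eval_X] at this
    rw [hfold, this]

lemma isHenonDeg_unique {h : ℂ × ℂ → ℂ × ℂ} {d d' : ℕ}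
    (h1 : IsHenonDeg h d) (h2 : IsHenonDeg h d') : d = d' := by
  obtain ⟨B, hB, hBe⟩ := isHenonDeg_curve h1
  obtain ⟨B', hB', hBe'⟩ := isHenonDeg_curve h2
  rw [← hB, ← hB']
  congr 1
  exact Polynomial.funext fun y => by rw [← hBe y, ← hBe' y]

lemma isHenonDeg_two_le {h : ℂ × ℂ → ℂ × ℂ} {d : ℕ} (hh : IsHenonDeg h d) : 2 ≤ d := by
  obtain ⟨l, hne, hl, -, hprod⟩ := hh
  cases l with
  | nil => exact absurd rfl hne
  | cons g t =>
    obtain ⟨a, p, ha, hp2, hpd, -⟩ := hl g List.mem_cons_self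
    have ht : 1 ≤ (t.map Prod.snd).prod := by
      refine List.one_le_prod_of_one_le ?_
      intro x hx
      simp only [List.mem_map] at hx
      obtain ⟨gd, hgd, rfl⟩ := hx
      obtain ⟨a', p', -, hp2', hpd', -⟩ := hl gd (List.mem_cons_of_mem _ hgd)
      omega
    simp only [List.map_cons, List.prod_cons] at hprod
    have : 2 ≤ g.2 := hpd ▸ hp2
    nlinarith [hprod]

lemma foldr_comp_append (l1 l2 : List (ℂ × ℂ → ℂ × ℂ)) :
    (l1 ++ l2).foldr (· ∘ ·) id = l1.foldr (· ∘ ·) id ∘ l2.foldr (· ∘ ·) id := by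
  induction l1 with
  | nil => rfl
  | cons g t ih => simp [List.foldr_cons, ih, Function.comp_assoc]

lemma isHenonDeg_comp {f g : ℂ × ℂ → ℂ × ℂ} {d e : ℕ}
    (hf : IsHenonDeg f d) (hg : IsHenonDeg g e) : IsHenonDeg (f ∘ g) (d * e) := by
  obtain ⟨l1, hne1, hl1, hfold1, hprod1⟩ := hf
  obtain ⟨l2, hne2, hl2, hfold2, hprod2⟩ := hg
  refine ⟨l1 ++ l2, by simp [hne1], ?_, ?_, ?_⟩
  · intro gd hgd
    rcases List.mem_append.mp hgd with h | h
    exacts [hl1 gd h, hl2 gd h]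
  · rw [List.map_append, foldr_comp_append, hfold1, hfold2]
  · rw [List.map_append, List.prod_append, hprod1, hprod2]

/-- The semigroup (under composition) generated by a finite family of
Hénon maps has a unique minimal generating set `G0` consisting of Hénon maps:
`G0` generates, and every generating set of the semigroup contains `G0`. -/
theorem unique_minimal_generating_set (n : ℕ) (hn : 0 < n)
    (H : Fin n → Function.End (ℂ × ℂ))
    (hH : ∀ i, IsHenon (H i : ℂ × ℂ → ℂ × ℂ)) :
    ∃! G0 : Set (Function.End (ℂ × ℂ)),
      (∀ g ∈ G0, IsHenon (g : ℂ × ℂ → ℂ × ℂ)) ∧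
      Subsemigroup.closure G0 = Subsemigroup.closure (Set.range H) ∧
      ∀ G : Set (Function.End (ℂ × ℂ)),
        Subsemigroup.closure G = Subsemigroup.closure (Set.range H) → G0 ⊆ G := by
  set S := Subsemigroup.closure (Set.range H) with hS
  -- every element of S is Hénon
  have hSH : ∀ s ∈ S, IsHenon (s : ℂ × ℂ → ℂ × ℂ) := by
    intro s hs
    induction hs using Subsemigroup.closure_induction with
    | mem x hx =>
      obtain ⟨i, rfl⟩ := hx
      exact hH i
    | mul x y hx hy px py =>
      obtain ⟨d, hd⟩ := px
      obtain ⟨e, he⟩ := py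
      exact ⟨d * e, isHenonDeg_comp hd he⟩
  set G0 : Set (Function.End (ℂ × ℂ)) :=
    {s | s ∈ S ∧ ¬∃ a b, a ∈ S ∧ b ∈ S ∧ s = a * b} with hG0
  have hG0S : G0 ⊆ (S : Set (Function.End (ℂ × ℂ))) := fun s hs => hs.1
  -- every element of S lies in closure G0, by strong induction on degree
  have key : ∀ d : ℕ, ∀ s ∈ S, IsHenonDeg (s : ℂ × ℂ → ℂ × ℂ) d →
      s ∈ Subsemigroup.closure G0 := by
    intro d
    induction d using Nat.strong_induction_on with
    | _ d ih =>
      intro s hs hsd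
      by_cases hirr : ∃ a b, a ∈ S ∧ b ∈ S ∧ s = a * b
      · obtain ⟨a, b, haS, hbS, rfl⟩ := hirr
        obtain ⟨da, hda⟩ := hSH a haS
        obtain ⟨db, hdb⟩ := hSH b hbS
        have hcomp : IsHenonDeg ((a * b : Function.End (ℂ × ℂ)) : ℂ × ℂ → ℂ × ℂ) (da * db) :=
          isHenonDeg_comp hda hdb
        have hd : d = da * db := isHenonDeg_unique hsd hcomp
        have h2a := isHenonDeg_two_le hda
        have h2b := isHenonDeg_two_le hdb
        have hlta : da < d := by nlinarith
        have hltb : db < d := by nlinarith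
        exact mul_mem (ih da hlta a haS hda) (ih db hltb b hbS hdb)
      · exact Subsemigroup.subset_closure ⟨hs, hirr⟩
  have hgen : Subsemigroup.closure G0 = S := by
    apply le_antisymm
    · exact Subsemigroup.closure_le.mpr hG0S
    · rw [hS]
      apply Subsemigroup.closure_le.mpr
      rintro x ⟨i, rfl⟩
      obtain ⟨d, hd⟩ := hH i
      exact key d (H i) (Subsemigroup.subset_closure ⟨i, rfl⟩) hd
  -- minimality
  have hmin : ∀ G : Set (Function.End (ℂ × ℂ)),
      Subsemigroup.closure G = S → G0 ⊆ G := by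
    intro G hG s hsG0
    have hsS : s ∈ S := hG0S hsG0
    have hsCl : s ∈ Subsemigroup.closure G := by rw [hG]; exact hsS
    have : s ∈ G ∨ ∃ a b, a ∈ Subsemigroup.closure G ∧ b ∈ Subsemigroup.closure G ∧
        s = a * b := by
      induction hsCl using Subsemigroup.closure_induction with
      | mem x hx => exact Or.inl hx
      | mul x y hx hy px py => exact Or.inr ⟨x, y, hx, hy, rfl⟩
    rcases this with h | ⟨a, b, ha, hb, rfl⟩
    · exact h
    · rw [hG] at ha hb
      exact absurd ⟨a, b, ha, hb, rfl⟩ hsG0.2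
  refine ⟨G0, ⟨fun g hg => hSH g (hG0S hg), hgen, hmin⟩, ?_⟩
  rintro G0' ⟨-, hgen', hmin'⟩
  exact Set.Subset.antisymm (hmin' G0 hgen) (hmin G0' hgen')
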